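/- arXiv:2308.15414 — 3 statements merged into one kernel-verified Lean document; each statement's English description precedes it below -/
import Mathlib

section
/- Let E be a Banach lattice and let P be a linear subspace of the bounded operators on E that is closed in the operator norm. On the set r-P(E) of r-P-operators define ‖T‖_{r-P} = inf{‖S‖ : ±T ≤ S, S ∈ P}. Then ‖·‖_{r-P} is a norm on r-P(E) satisfying ‖T‖_{r-P} ≥ ‖T‖_r ≥ ‖T‖ for all T ∈ r-P(E), where ‖T‖_r = inf{‖S‖ : ±T ≤ S, S a bounded operator on E} is the regular norm, and r-P(E) is complete with respect to ‖·‖_{r-P}: every ‖·‖_{r-P}-Cauchy sequence in r-P(E) converges in the norm ‖·‖_{r-P} to an element of r-P(E). -/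
open Filter Topology

/-- A bounded operator on a Banach lattice is positive if it maps positive elements to
positive elements. -/
def IsPosOp {E : Type*} [NormedAddCommGroup E] [Lattice E] [HasSolidNorm E] [IsOrderedAddMonoid E] [NormedSpace ℝ E]
    (T : E →L[ℝ] E) : Prop :=
  ∀ x : E, 0 ≤ x → 0 ≤ T x

/-- The operator order: `S ≤ T` iff `T - S` is a positive operator. -/
def OpLE {E : Type*} [NormedAddCommGroup E] [Lattice E] [HasSolidNorm E] [IsOrderedAddMonoid E] [NormedSpace ℝ E]
    (S T : E →L[ℝ] E) : Prop :=
  IsPosOp (T - S)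

/-- `T` is an r-`P`-operator if `T = T₁ - T₂` with `T₁, T₂` positive operators in `P`. -/
def IsRPOp {E : Type*} [NormedAddCommGroup E] [Lattice E] [HasSolidNorm E] [IsOrderedAddMonoid E] [NormedSpace ℝ E]
    (P : Set (E →L[ℝ] E)) (T : E →L[ℝ] E) : Prop :=
  ∃ T₁ T₂ : E →L[ℝ] E, T₁ ∈ P ∧ T₂ ∈ P ∧ IsPosOp T₁ ∧ IsPosOp T₂ ∧ T = T₁ - T₂

/-- The r-`P` norm: `‖T‖_{r-P} = inf {‖S‖ : ±T ≤ S ∈ P}`. -/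
noncomputable def rPNorm {E : Type*} [NormedAddCommGroup E] [Lattice E] [HasSolidNorm E] [IsOrderedAddMonoid E] [NormedSpace ℝ E]
    (P : Set (E →L[ℝ] E)) (T : E →L[ℝ] E) : ℝ :=
  sInf {c : ℝ | ∃ S ∈ P, OpLE T S ∧ OpLE (-T) S ∧ ‖S‖ = c}

/-- The regular norm: `‖T‖_r = inf {‖S‖ : ±T ≤ S ∈ L(E)}`. -/
noncomputable def regNorm {E : Type*} [NormedAddCommGroup E] [Lattice E] [HasSolidNorm E] [IsOrderedAddMonoid E] [NormedSpace ℝ E]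
    (T : E →L[ℝ] E) : ℝ :=
  sInf {c : ℝ | ∃ S : E →L[ℝ] E, OpLE T S ∧ OpLE (-T) S ∧ ‖S‖ = c}

section Aux
set_option linter.unusedSectionVars false
variable {E : Type*} [NormedAddCommGroup E] [Lattice E] [HasSolidNorm E] [IsOrderedAddMonoid E] [NormedSpace ℝ E]

lemma nonneg_of_add_self {a : E} (h : 0 ≤ a + a) : 0 ≤ a := by
  have h1 : -a ≤ a := sub_nonneg.1 (by rwa [sub_neg_eq_add])
  have h2 : |a| = a := sup_eq_left.2 h1
  rw [← h2]; exact abs_nonneg a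

/-- scalar positivity, via dyadic approximation -/
lemma smul_nonneg_real {c : ℝ} (hc : 0 ≤ c) {x : E} (hx : 0 ≤ x) : 0 ≤ c • x := by
  have pow2 : ∀ m : ℕ, 0 ≤ ((2:ℝ)^m)⁻¹ • x := by
    intro m
    induction m with
    | zero => simpa using hx
    | succ m ih =>
      apply nonneg_of_add_self
      have h : ((2:ℝ)^(m+1))⁻¹ • x + ((2:ℝ)^(m+1))⁻¹ • x = ((2:ℝ)^m)⁻¹ • x := by
        rw [← add_smul]; ring_nf
      rwa [h]
  have dyadic : ∀ k m : ℕ, 0 ≤ ((k : ℝ) / 2^m) • x := by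
    intro k m
    have h : ((k : ℝ) / 2^m) • x = k • (((2:ℝ)^m)⁻¹ • x) := by
      rw [← Nat.cast_smul_eq_nsmul ℝ k (((2:ℝ)^m)⁻¹ • x), smul_smul, div_eq_mul_inv]
    rw [h]
    exact nsmul_nonneg (pow2 m) k
  have seq : Tendsto (fun m : ℕ => (⌊c * 2^m⌋₊ : ℝ) / 2^m) atTop (𝓝 c) := by
    have h1 : Tendsto (fun m : ℕ => c - ((2:ℝ)^m)⁻¹) atTop (𝓝 (c - 0)) :=
      tendsto_const_nhds.sub (tendsto_inv_atTop_zero.comp (tendsto_pow_atTop_atTop_of_one_lt one_lt_two))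
    rw [sub_zero] at h1
    apply tendsto_of_tendsto_of_tendsto_of_le_of_le h1 tendsto_const_nhds
    · intro m
      have hpos : (0:ℝ) < 2^m := by positivity
      have h2 : c * 2^m - 1 ≤ (⌊c * 2^m⌋₊ : ℝ) := (Nat.sub_one_lt_floor _).le
      show c - ((2:ℝ)^m)⁻¹ ≤ (⌊c * 2^m⌋₊ : ℝ) / 2^m
      rw [le_div_iff₀ hpos]
      have h3 : (c - ((2:ℝ)^m)⁻¹) * 2^m = c * 2^m - 1 := by field_simp
      rw [h3]; exact h2
    · intro m
      have hpos : (0:ℝ) < 2^m := by positivity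
      show (⌊c * 2^m⌋₊ : ℝ) / 2^m ≤ c
      rw [div_le_iff₀ hpos]
      exact Nat.floor_le (by positivity)
  have tends : Tendsto (fun m : ℕ => ((⌊c * 2^m⌋₊ : ℝ) / 2^m) • x) atTop (𝓝 (c • x)) :=
    seq.smul_const x
  exact ge_of_tendsto' tends fun m => dyadic _ _

lemma isPosOp_add {A B : E →L[ℝ] E} (hA : IsPosOp A) (hB : IsPosOp B) : IsPosOp (A + B) :=
  fun x hx => by simpa using add_nonneg (hA x hx) (hB x hx)

lemma isPosOp_smul {c : ℝ} (hc : 0 ≤ c) {A : E →L[ℝ] E} (hA : IsPosOp A) : IsPosOp (c • A) :=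
  fun x hx => by simpa using smul_nonneg_real hc (hA x hx)

lemma opLE_neg_iff {T S : E →L[ℝ] E} : OpLE (-T) S ↔ IsPosOp (S + T) := by
  unfold OpLE; rw [sub_neg_eq_add]

lemma isPosOp_of_feas {T S : E →L[ℝ] E} (h1 : OpLE T S) (h2 : OpLE (-T) S) : IsPosOp S := by
  have h2' : IsPosOp (S + T) := opLE_neg_iff.1 h2
  intro x hx
  apply nonneg_of_add_self
  have h := add_nonneg (h1 x hx) (h2' x hx)
  simpa [sub_add_add_cancel] using add_nonneg (h1 x hx) (h2' x hx)

lemma norm_le_of_feas {T S : E →L[ℝ] E} (h1 : OpLE T S) (h2 : OpLE (-T) S) : ‖T‖ ≤ ‖S‖ := by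
  have hS : IsPosOp S := isPosOp_of_feas h1 h2
  have h2' : IsPosOp (S + T) := opLE_neg_iff.1 h2
  refine ContinuousLinearMap.opNorm_le_bound _ (norm_nonneg S) fun x => ?_
  have hTy : ∀ y : E, 0 ≤ y → |T y| ≤ S y := by
    intro y hy
    refine abs_le'.2 ⟨?_, ?_⟩
    · have h := h1 y hy
      simp only [ContinuousLinearMap.sub_apply] at h
      exact sub_nonneg.1 h
    · have h := h2' y hy
      simp only [ContinuousLinearMap.add_apply] at h
      rw [neg_le_iff_add_nonneg']
      rwa [add_comm] at h
  have key : |T x| ≤ S |x| := by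
    calc |T x| = |T x⁺ - T x⁻| := by rw [← map_sub, posPart_sub_negPart]
    _ = |T x⁺ + -(T x⁻)| := by rw [sub_eq_add_neg]
    _ ≤ |T x⁺| + |-(T x⁻)| := abs_add_le _ _
    _ = |T x⁺| + |T x⁻| := by rw [abs_neg]
    _ ≤ S x⁺ + S x⁻ := add_le_add (hTy _ (posPart_nonneg x)) (hTy _ (negPart_nonneg x))
    _ = S |x| := by rw [← map_add, posPart_add_negPart]
  calc ‖T x‖ = ‖|T x|‖ := (norm_abs_eq_norm _).symm
  _ ≤ ‖S |x|‖ := by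
      apply HasSolidNorm.solid
      rwa [abs_abs, abs_of_nonneg (hS _ (abs_nonneg x))]
  _ ≤ ‖S‖ * ‖|x|‖ := S.le_opNorm _
  _ = ‖S‖ * ‖x‖ := by rw [norm_abs_eq_norm]

noncomputable def rPNorm' (P : Set (E →L[ℝ] E)) (T : E →L[ℝ] E) : ℝ :=
  sInf {c : ℝ | ∃ S ∈ P, OpLE T S ∧ OpLE (-T) S ∧ ‖S‖ = c}

noncomputable def regNorm' (T : E →L[ℝ] E) : ℝ :=
  sInf {c : ℝ | ∃ S : E →L[ℝ] E, OpLE T S ∧ OpLE (-T) S ∧ ‖S‖ = c}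

def IsRPOp' (P : Set (E →L[ℝ] E)) (T : E →L[ℝ] E) : Prop :=
  ∃ T₁ T₂ : E →L[ℝ] E, T₁ ∈ P ∧ T₂ ∈ P ∧ IsPosOp T₁ ∧ IsPosOp T₂ ∧ T = T₁ - T₂

variable {P : Set (E →L[ℝ] E)}

lemma rp_bddBelow (T : E →L[ℝ] E) :
    BddBelow {c : ℝ | ∃ S ∈ P, OpLE T S ∧ OpLE (-T) S ∧ ‖S‖ = c} :=
  ⟨0, by rintro c ⟨S, _, _, _, rfl⟩; exact norm_nonneg S⟩

lemma reg_bddBelow (T : E →L[ℝ] E) :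
    BddBelow {c : ℝ | ∃ S : E →L[ℝ] E, OpLE T S ∧ OpLE (-T) S ∧ ‖S‖ = c} :=
  ⟨0, by rintro c ⟨S, _, _, rfl⟩; exact norm_nonneg S⟩

lemma rPNorm'_le {T S : E →L[ℝ] E} (hS : S ∈ P) (h1 : OpLE T S) (h2 : OpLE (-T) S) :
    rPNorm' P T ≤ ‖S‖ :=
  csInf_le (rp_bddBelow T) ⟨S, hS, h1, h2, rfl⟩

lemma rp_feas_nonempty {Q : Submodule ℝ (E →L[ℝ] E)} {T : E →L[ℝ] E}
    (h : IsRPOp' (Q : Set (E →L[ℝ] E)) T) :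
    ∃ S ∈ (Q : Set (E →L[ℝ] E)), OpLE T S ∧ OpLE (-T) S := by
  obtain ⟨T₁, T₂, hT₁P, hT₂P, hT₁, hT₂, rfl⟩ := h
  refine ⟨T₁ + T₂, Q.add_mem hT₁P hT₂P, ?_, ?_⟩
  · show IsPosOp (T₁ + T₂ - (T₁ - T₂))
    have h : T₁ + T₂ - (T₁ - T₂) = T₂ + T₂ := by abel
    rw [h]; exact isPosOp_add hT₂ hT₂
  · rw [opLE_neg_iff]
    have h : T₁ + T₂ + (T₁ - T₂) = T₁ + T₁ := by abel
    rw [h]; exact isPosOp_add hT₁ hT₁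

lemma norm_le_rPNorm' {T : E →L[ℝ] E} {Q : Submodule ℝ (E →L[ℝ] E)}
    (h : IsRPOp' (Q : Set (E →L[ℝ] E)) T) : ‖T‖ ≤ rPNorm' (Q : Set (E →L[ℝ] E)) T := by
  obtain ⟨S, hS, h1, h2⟩ := rp_feas_nonempty h
  unfold rPNorm'
  have hne : Set.Nonempty {c : ℝ | ∃ S' ∈ (Q : Set (E →L[ℝ] E)), OpLE T S' ∧ OpLE (-T) S' ∧ ‖S'‖ = c} :=
    ⟨‖S‖, S, hS, h1, h2, rfl⟩
  exact le_csInf hne (by rintro c ⟨S', _, h1', h2', rfl⟩; exact norm_le_of_feas h1' h2')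

lemma rPNorm'_nonneg {T : E →L[ℝ] E} {Q : Submodule ℝ (E →L[ℝ] E)}
    (h : IsRPOp' (Q : Set (E →L[ℝ] E)) T) : 0 ≤ rPNorm' (Q : Set (E →L[ℝ] E)) T :=
  le_trans (norm_nonneg T) (norm_le_rPNorm' h)

lemma exists_feas_lt {T : E →L[ℝ] E} {Q : Submodule ℝ (E →L[ℝ] E)} {c : ℝ}
    (h : IsRPOp' (Q : Set (E →L[ℝ] E)) T) (hlt : rPNorm' (Q : Set (E →L[ℝ] E)) T < c) :
    ∃ S ∈ (Q : Set (E →L[ℝ] E)), OpLE T S ∧ OpLE (-T) S ∧ ‖S‖ < c := by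
  obtain ⟨S₀, hS₀, h1₀, h2₀⟩ := rp_feas_nonempty h
  unfold rPNorm' at hlt
  have hne : Set.Nonempty {c : ℝ | ∃ S ∈ (Q : Set (E →L[ℝ] E)), OpLE T S ∧ OpLE (-T) S ∧ ‖S‖ = c} :=
    ⟨‖S₀‖, S₀, hS₀, h1₀, h2₀, rfl⟩
  obtain ⟨d, ⟨S, hS, h1, h2, rfl⟩, hdc⟩ := exists_lt_of_csInf_lt hne hlt
  exact ⟨S, hS, h1, h2, hdc⟩

lemma regNorm'_le_rPNorm' {T : E →L[ℝ] E} {Q : Submodule ℝ (E →L[ℝ] E)}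
    (h : IsRPOp' (Q : Set (E →L[ℝ] E)) T) : regNorm' T ≤ rPNorm' (Q : Set (E →L[ℝ] E)) T := by
  obtain ⟨S, hS, h1, h2⟩ := rp_feas_nonempty h
  unfold rPNorm' regNorm'
  have hne : Set.Nonempty {c : ℝ | ∃ S' ∈ (Q : Set (E →L[ℝ] E)), OpLE T S' ∧ OpLE (-T) S' ∧ ‖S'‖ = c} :=
    ⟨‖S‖, S, hS, h1, h2, rfl⟩
  apply csInf_le_csInf (reg_bddBelow T) hne
  rintro c ⟨S', _, h1', h2', rfl⟩
  exact ⟨S', h1', h2', rfl⟩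

lemma norm_le_regNorm' {T : E →L[ℝ] E} {Q : Submodule ℝ (E →L[ℝ] E)}
    (h : IsRPOp' (Q : Set (E →L[ℝ] E)) T) : ‖T‖ ≤ regNorm' T := by
  obtain ⟨S, _, h1, h2⟩ := rp_feas_nonempty h
  unfold regNorm'
  have hne : Set.Nonempty {c : ℝ | ∃ S' : E →L[ℝ] E, OpLE T S' ∧ OpLE (-T) S' ∧ ‖S'‖ = c} :=
    ⟨‖S‖, S, h1, h2, rfl⟩
  exact le_csInf hne (by rintro c ⟨S', h1', h2', rfl⟩; exact norm_le_of_feas h1' h2')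

lemma isRPOp'_neg {T : E →L[ℝ] E} (h : IsRPOp' P T) : IsRPOp' P (-T) := by
  obtain ⟨T₁, T₂, hT₁P, hT₂P, hT₁, hT₂, rfl⟩ := h
  exact ⟨T₂, T₁, hT₂P, hT₁P, hT₂, hT₁, by abel⟩

lemma isRPOp'_add {T S : E →L[ℝ] E} {Q : Submodule ℝ (E →L[ℝ] E)}
    (hT : IsRPOp' (Q : Set (E →L[ℝ] E)) T) (hS : IsRPOp' (Q : Set (E →L[ℝ] E)) S) :
    IsRPOp' (Q : Set (E →L[ℝ] E)) (T + S) := by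
  obtain ⟨T₁, T₂, hT₁P, hT₂P, hT₁, hT₂, rfl⟩ := hT
  obtain ⟨S₁, S₂, hS₁P, hS₂P, hS₁, hS₂, rfl⟩ := hS
  exact ⟨T₁ + S₁, T₂ + S₂, Q.add_mem hT₁P hS₁P, Q.add_mem hT₂P hS₂P,
    isPosOp_add hT₁ hS₁, isPosOp_add hT₂ hS₂, by abel⟩

lemma isRPOp'_sub {T S : E →L[ℝ] E} {Q : Submodule ℝ (E →L[ℝ] E)}
    (hT : IsRPOp' (Q : Set (E →L[ℝ] E)) T) (hS : IsRPOp' (Q : Set (E →L[ℝ] E)) S) :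
    IsRPOp' (Q : Set (E →L[ℝ] E)) (T - S) := by
  rw [sub_eq_add_neg]; exact isRPOp'_add hT (isRPOp'_neg hS)

lemma rPNorm'_neg (T : E →L[ℝ] E) : rPNorm' P (-T) = rPNorm' P T := by
  unfold rPNorm'
  rw [neg_neg]
  congr 1
  ext c
  constructor <;> (rintro ⟨S, hS, h1, h2, rfl⟩; exact ⟨S, hS, h2, h1, rfl⟩)

lemma rPNorm'_triangle {T S : E →L[ℝ] E} {Q : Submodule ℝ (E →L[ℝ] E)}
    (hT : IsRPOp' (Q : Set (E →L[ℝ] E)) T) (hS : IsRPOp' (Q : Set (E →L[ℝ] E)) S) :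
    rPNorm' (Q : Set (E →L[ℝ] E)) (T + S) ≤
      rPNorm' (Q : Set (E →L[ℝ] E)) T + rPNorm' (Q : Set (E →L[ℝ] E)) S := by
  obtain ⟨A₀, hA₀, hA1₀, hA2₀⟩ := rp_feas_nonempty hT
  obtain ⟨B₀, hB₀, hB1₀, hB2₀⟩ := rp_feas_nonempty hS
  have key : ∀ A B : E →L[ℝ] E, A ∈ Q → B ∈ Q → OpLE T A → OpLE (-T) A → OpLE S B →
      OpLE (-S) B → rPNorm' (Q : Set (E →L[ℝ] E)) (T + S) ≤ ‖A‖ + ‖B‖ := by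
    intro A B hA hB h1 h2 h3 h4
    have hfeas1 : OpLE (T + S) (A + B) := by
      show IsPosOp (A + B - (T + S))
      have he : A + B - (T + S) = (A - T) + (B - S) := by abel
      rw [he]; exact isPosOp_add h1 h3
    have hfeas2 : OpLE (-(T + S)) (A + B) := by
      rw [opLE_neg_iff]
      have he : A + B + (T + S) = (A + T) + (B + S) := by abel
      rw [he]; exact isPosOp_add (opLE_neg_iff.1 h2) (opLE_neg_iff.1 h4)
    exact le_trans (rPNorm'_le (Q.add_mem hA hB) hfeas1 hfeas2) (norm_add_le A B)
  unfold rPNorm'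
  have step1 : sInf {c : ℝ | ∃ S' ∈ (Q : Set (E →L[ℝ] E)), OpLE (T + S) S' ∧ OpLE (-(T + S)) S' ∧ ‖S'‖ = c}
      - sInf {c : ℝ | ∃ S' ∈ (Q : Set (E →L[ℝ] E)), OpLE S S' ∧ OpLE (-S) S' ∧ ‖S'‖ = c}
      ≤ sInf {c : ℝ | ∃ S' ∈ (Q : Set (E →L[ℝ] E)), OpLE T S' ∧ OpLE (-T) S' ∧ ‖S'‖ = c} := by
    have hneA : Set.Nonempty {c : ℝ | ∃ S' ∈ (Q : Set (E →L[ℝ] E)), OpLE T S' ∧ OpLE (-T) S' ∧ ‖S'‖ = c} :=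
      ⟨‖A₀‖, A₀, hA₀, hA1₀, hA2₀, rfl⟩
    apply le_csInf hneA
    rintro c ⟨A, hA, h1, h2, rfl⟩
    have inner : sInf {c : ℝ | ∃ S' ∈ (Q : Set (E →L[ℝ] E)), OpLE (T + S) S' ∧ OpLE (-(T + S)) S' ∧ ‖S'‖ = c}
        - ‖A‖ ≤ sInf {c : ℝ | ∃ S' ∈ (Q : Set (E →L[ℝ] E)), OpLE S S' ∧ OpLE (-S) S' ∧ ‖S'‖ = c} := by
      have hneB : Set.Nonempty {c : ℝ | ∃ S' ∈ (Q : Set (E →L[ℝ] E)), OpLE S S' ∧ OpLE (-S) S' ∧ ‖S'‖ = c} :=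
        ⟨‖B₀‖, B₀, hB₀, hB1₀, hB2₀, rfl⟩
      apply le_csInf hneB
      rintro d ⟨B, hB, h3, h4, rfl⟩
      have := key A B hA hB h1 h2 h3 h4
      unfold rPNorm' at this
      linarith
    linarith
  linarith [step1]

lemma isPosOp_zero : IsPosOp (0 : E →L[ℝ] E) := fun x _ => by simp

lemma opLE_zero_zero : OpLE (0 : E →L[ℝ] E) 0 := fun x _ => by simp

lemma isRPOp'_zero {Q : Submodule ℝ (E →L[ℝ] E)} : IsRPOp' (Q : Set (E →L[ℝ] E)) 0 :=
  ⟨0, 0, Q.zero_mem, Q.zero_mem, isPosOp_zero, isPosOp_zero, by simp⟩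

lemma rPNorm'_zero {Q : Submodule ℝ (E →L[ℝ] E)} : rPNorm' (Q : Set (E →L[ℝ] E)) 0 = 0 := by
  refine le_antisymm ?_ (rPNorm'_nonneg isRPOp'_zero)
  have h := rPNorm'_le (T := (0 : E →L[ℝ] E)) (Q.zero_mem) opLE_zero_zero
    (by rw [neg_zero]; exact opLE_zero_zero)
  simpa using h

lemma isRPOp'_smul {Q : Submodule ℝ (E →L[ℝ] E)} {T : E →L[ℝ] E} (a : ℝ)
    (hT : IsRPOp' (Q : Set (E →L[ℝ] E)) T) : IsRPOp' (Q : Set (E →L[ℝ] E)) (a • T) := by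
  obtain ⟨T₁, T₂, h1P, h2P, h1, h2, rfl⟩ := hT
  rcases le_or_gt 0 a with ha | ha
  · exact ⟨a • T₁, a • T₂, Q.smul_mem a h1P, Q.smul_mem a h2P,
      isPosOp_smul ha h1, isPosOp_smul ha h2, by rw [smul_sub]⟩
  · refine ⟨(-a) • T₂, (-a) • T₁, Q.smul_mem _ h2P, Q.smul_mem _ h1P,
      isPosOp_smul (by linarith) h2, isPosOp_smul (by linarith) h1, ?_⟩
    module

lemma feas_smul {T S : E →L[ℝ] E} (h1 : OpLE T S) (h2 : OpLE (-T) S) (a : ℝ) :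
    OpLE (a • T) (|a| • S) ∧ OpLE (-(a • T)) (|a| • S) := by
  have h2' : IsPosOp (S + T) := opLE_neg_iff.1 h2
  have c1 : (0:ℝ) ≤ (|a| - a) / 2 := by
    have := le_abs_self a; linarith
  have c2 : (0:ℝ) ≤ (|a| + a) / 2 := by
    have := neg_abs_le a; linarith
  constructor
  · show IsPosOp (|a| • S - a • T)
    have he : |a| • S - a • T = ((|a| - a) / 2) • (S + T) + ((|a| + a) / 2) • (S - T) := by
      module
    rw [he]; exact isPosOp_add (isPosOp_smul c1 h2') (isPosOp_smul c2 h1)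
  · rw [opLE_neg_iff]
    have he : |a| • S + a • T = ((|a| + a) / 2) • (S + T) + ((|a| - a) / 2) • (S - T) := by
      module
    rw [he]; exact isPosOp_add (isPosOp_smul c2 h2') (isPosOp_smul c1 h1)

lemma rPNorm'_smul_le {Q : Submodule ℝ (E →L[ℝ] E)} {T : E →L[ℝ] E}
    (hT : IsRPOp' (Q : Set (E →L[ℝ] E)) T) (a : ℝ) :
    rPNorm' (Q : Set (E →L[ℝ] E)) (a • T) ≤ |a| * rPNorm' (Q : Set (E →L[ℝ] E)) T := by
  rcases eq_or_ne a 0 with rfl | ha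
  · simp [rPNorm'_zero]
  have hpos : 0 < |a| := abs_pos.2 ha
  obtain ⟨S₀, hS₀, h1₀, h2₀⟩ := rp_feas_nonempty hT
  have claim : rPNorm' (Q : Set (E →L[ℝ] E)) (a • T) / |a|
      ≤ sInf {c : ℝ | ∃ S ∈ (Q : Set (E →L[ℝ] E)), OpLE T S ∧ OpLE (-T) S ∧ ‖S‖ = c} := by
    have hne : Set.Nonempty {c : ℝ | ∃ S ∈ (Q : Set (E →L[ℝ] E)), OpLE T S ∧ OpLE (-T) S ∧ ‖S‖ = c} :=
      ⟨‖S₀‖, S₀, hS₀, h1₀, h2₀, rfl⟩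
    apply le_csInf hne
    rintro c ⟨S, hS, h1, h2, rfl⟩
    rw [div_le_iff₀ hpos]
    obtain ⟨f1, f2⟩ := feas_smul h1 h2 a
    calc rPNorm' (Q : Set (E →L[ℝ] E)) (a • T) ≤ ‖|a| • S‖ :=
          rPNorm'_le (Q.smul_mem _ hS) f1 f2
    _ = ‖S‖ * |a| := by
          rw [show ‖|a| • S‖ = ‖(|a|) • S‖ from rfl, norm_smul (|a|) S, Real.norm_eq_abs, abs_abs, mul_comm]
  rw [div_le_iff₀ hpos] at claim
  calc rPNorm' (Q : Set (E →L[ℝ] E)) (a • T) ≤ _ * |a| := claim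
  _ = |a| * rPNorm' (Q : Set (E →L[ℝ] E)) T := by rw [mul_comm]; rfl

lemma rPNorm'_smul {Q : Submodule ℝ (E →L[ℝ] E)} {T : E →L[ℝ] E}
    (hT : IsRPOp' (Q : Set (E →L[ℝ] E)) T) (a : ℝ) :
    rPNorm' (Q : Set (E →L[ℝ] E)) (a • T) = |a| * rPNorm' (Q : Set (E →L[ℝ] E)) T := by
  rcases eq_or_ne a 0 with rfl | ha
  · simp [rPNorm'_zero]
  refine le_antisymm (rPNorm'_smul_le hT a) ?_
  have h2 := rPNorm'_smul_le (isRPOp'_smul a hT) a⁻¹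
  rw [smul_smul, inv_mul_cancel₀ ha, one_smul, abs_inv] at h2
  have hpos : 0 < |a| := abs_pos.2 ha
  calc |a| * rPNorm' (Q : Set (E →L[ℝ] E)) T ≤ |a| * (|a|⁻¹ * rPNorm' (Q : Set (E →L[ℝ] E)) (a • T)) :=
        mul_le_mul_of_nonneg_left h2 hpos.le
  _ = rPNorm' (Q : Set (E →L[ℝ] E)) (a • T) := by field_simp

lemma isPosOp_of_tendsto {g : ℕ → E →L[ℝ] E} {A : E →L[ℝ] E}
    (hg : ∀ n, IsPosOp (g n)) (h : Tendsto g atTop (𝓝 A)) : IsPosOp A := by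
  intro x hx
  have happ : Tendsto (fun n => g n x) atTop (𝓝 (A x)) :=
    ((ContinuousLinearMap.apply ℝ E x).continuous.tendsto A).comp h
  exact ge_of_tendsto' happ fun n => hg n x hx

lemma isPosOp_sum {ι : Type*} (s : Finset ι) (A : ι → E →L[ℝ] E)
    (h : ∀ i ∈ s, IsPosOp (A i)) : IsPosOp (∑ i ∈ s, A i) := by
  intro x hx
  rw [ContinuousLinearMap.sum_apply]
  exact Finset.sum_nonneg fun i hi => h i hi x hx

lemma isPosOp_half {A : E →L[ℝ] E} (h : IsPosOp A) : IsPosOp (((1:ℝ)/2) • A) := by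
  intro x hx
  apply nonneg_of_add_self
  have he : ((1:ℝ)/2) • A + ((1:ℝ)/2) • A = A := by module
  calc (0:E) ≤ A x := h x hx
  _ = (((1:ℝ)/2) • A + ((1:ℝ)/2) • A) x := by rw [he]
  _ = (((1:ℝ)/2) • A) x + (((1:ℝ)/2) • A) x := by simp

lemma rp_complete {Q : Submodule ℝ (E →L[ℝ] E)} (hP : IsClosed (Q : Set (E →L[ℝ] E)))
    [CompleteSpace E] (f : ℕ → E →L[ℝ] E)
    (hf : ∀ n, IsRPOp' (Q : Set (E →L[ℝ] E)) (f n))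
    (hC : ∀ ε > (0 : ℝ), ∃ N : ℕ, ∀ m ≥ N, ∀ n ≥ N,
      rPNorm' (Q : Set (E →L[ℝ] E)) (f m - f n) < ε) :
    ∃ T : E →L[ℝ] E, IsRPOp' (Q : Set (E →L[ℝ] E)) T ∧
      Tendsto (fun n => rPNorm' (Q : Set (E →L[ℝ] E)) (f n - T)) atTop (𝓝 0) := by
  have hfQ : ∀ n, f n ∈ Q := by
    intro n; obtain ⟨T₁, T₂, h1, h2, _, _, he⟩ := hf n; rw [he]; exact Q.sub_mem h1 h2
  -- f is Cauchy in operator norm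
  have hcauchy : CauchySeq f := by
    rw [Metric.cauchySeq_iff]
    intro ε hε
    obtain ⟨N, hN⟩ := hC ε hε
    refine ⟨N, fun m hm n hn => ?_⟩
    rw [dist_eq_norm]
    exact lt_of_le_of_lt (norm_le_rPNorm' (isRPOp'_sub (hf m) (hf n))) (hN m hm n hn)
  obtain ⟨T, hT⟩ := cauchySeq_tendsto_of_complete hcauchy
  have hTQ : T ∈ Q := hP.mem_of_tendsto hT (Filter.Eventually.of_forall hfQ)
  -- fast subsequence
  choose M hM using fun k : ℕ => hC ((1/2 : ℝ)^k) (by positivity)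
  set N : ℕ → ℕ := fun k => Nat.rec (M 0) (fun k ih => max (ih + 1) (M (k + 1))) k with hNdef
  have hNsucc : ∀ k, N (k + 1) = max (N k + 1) (M (k + 1)) := fun k => rfl
  have hNmono : StrictMono N := strictMono_nat_of_lt_succ fun k => by
    rw [hNsucc]; exact lt_of_lt_of_le (Nat.lt_succ_self _) (le_max_left _ _)
  have hNM : ∀ k, M k ≤ N k := by
    intro k; cases k with
    | zero => exact le_refl _
    | succ k => rw [hNsucc]; exact le_max_right _ _
  have hclose : ∀ k m n, N k ≤ m → N k ≤ n →
      rPNorm' (Q : Set (E →L[ℝ] E)) (f m - f n) < (1/2 : ℝ)^k :=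
    fun k m n hm hn => hM k m (le_trans (hNM k) hm) n (le_trans (hNM k) hn)
  -- dominating operators for consecutive differences
  have hstep : ∀ k, rPNorm' (Q : Set (E →L[ℝ] E)) (f (N (k+1)) - f (N k)) < (1/2 : ℝ)^k :=
    fun k => hclose k _ _ (hNmono.monotone (Nat.le_succ k)) le_rfl
  choose Sd hSdQ hSd1 hSd2 hSdn using
    fun k => exists_feas_lt (isRPOp'_sub (hf _) (hf _)) (hstep k)
  -- summability
  have hgeo : Summable fun k : ℕ => (1/2 : ℝ)^k := summable_geometric_of_lt_one (by norm_num) (by norm_num)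
  have hsum : Summable Sd :=
    Summable.of_norm_bounded hgeo fun k => (hSdn k).le
  have hsum_n : ∀ n, Summable fun k => Sd (k + n) := fun n => (summable_nat_add_iff n).2 hsum
  set U : ℕ → E →L[ℝ] E := fun n => ∑' k, Sd (k + n) with hUdef
  -- U n ∈ Q
  have hUQ : ∀ n, U n ∈ Q := by
    intro n
    apply hP.mem_of_tendsto (hsum_n n).hasSum.tendsto_sum_nat
    exact Filter.Eventually.of_forall fun j => Q.sum_mem fun i _ => hSdQ (i + n)
  -- norm bound on U n
  have hUnorm : ∀ n, ‖U n‖ ≤ 2 * (1/2 : ℝ)^n := by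
    intro n
    have h1 : Summable fun k => ‖Sd (k + n)‖ := by
      apply Summable.of_nonneg_of_le (fun k => norm_nonneg _) (fun k => (hSdn (k + n)).le)
      exact (summable_nat_add_iff n).2 hgeo
    calc ‖U n‖ ≤ ∑' k, ‖Sd (k + n)‖ := norm_tsum_le_tsum_norm h1
    _ ≤ ∑' k, (1/2 : ℝ)^(k + n) := Summable.tsum_le_tsum (fun k => (hSdn (k + n)).le) h1
        ((summable_nat_add_iff n).2 hgeo)
    _ = (∑' k, (1/2 : ℝ)^k) * (1/2 : ℝ)^n := by
        rw [← tsum_mul_right]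
        exact tsum_congr fun k => pow_add _ _ _
    _ = 2 * (1/2 : ℝ)^n := by
        rw [tsum_geometric_of_lt_one (by norm_num) (by norm_num)]; norm_num
  -- positivity of Sd and U
  have hSdpos : ∀ k, IsPosOp (Sd k) := fun k => isPosOp_of_feas (hSd1 k) (hSd2 k)
  have hUpos : ∀ n, IsPosOp (U n) := by
    intro n x hx
    have hmap : HasSum (fun k => Sd (k + n) x) (U n x) :=
      (hsum_n n).hasSum.mapL (ContinuousLinearMap.apply ℝ E x)
    exact hmap.nonneg fun k => hSdpos (k + n) x hx
  -- U n decomposes: U n = partial + U (n + j)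
  have hUsplit : ∀ n j, U n = (∑ k ∈ Finset.range j, Sd (k + n)) + U (n + j) := by
    intro n j
    have h := Summable.sum_add_tsum_nat_add (f := fun k => Sd (k + n)) j (hsum_n n)
    have h2 : (∑' i, Sd (i + j + n)) = U (n + j) := by
      rw [hUdef]
      exact tsum_congr fun i => by rw [show i + j + n = i + (n + j) by omega]
    rw [hUdef]
    simp only
    rw [← h, h2]
  -- telescoping
  have htel : ∀ n j, (∑ k ∈ Finset.range j, (f (N (k + n + 1)) - f (N (k + n))))
      = f (N (n + j)) - f (N n) := by
    intro n j
    induction j with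
    | zero => simp
    | succ j ih =>
      rw [Finset.sum_range_succ, ih]
      have e1 : n + (j + 1) = j + n + 1 := by omega
      have e2 : n + j = j + n := by omega
      rw [e1, e2]
      abel
  -- feasibility of U n for T - f (N n)
  have hfeas1 : ∀ n, OpLE (T - f (N n)) (U n) := by
    intro n
    show IsPosOp (U n - (T - f (N n)))
    have hjpos : ∀ j, IsPosOp (U n - (f (N (n + j)) - f (N n))) := by
      intro j
      have he : U n - (f (N (n + j)) - f (N n)) =
          (∑ k ∈ Finset.range j, (Sd (k + n) - (f (N (k + n + 1)) - f (N (k + n))))) + U (n + j) := by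
        rw [Finset.sum_sub_distrib, htel n j, hUsplit n j]; abel
      rw [he]
      exact isPosOp_add (isPosOp_sum _ _ fun k _ => hSd1 (k + n)) (hUpos (n + j))
    have hNat : Tendsto (fun j => N (n + j)) atTop atTop := by
      apply hNmono.tendsto_atTop.comp
      simpa [add_comm] using tendsto_add_atTop_nat n
    have hlim : Tendsto (fun j => U n - (f (N (n + j)) - f (N n))) atTop
        (𝓝 (U n - (T - f (N n)))) :=
      tendsto_const_nhds.sub ((hT.comp hNat).sub tendsto_const_nhds)
    exact isPosOp_of_tendsto hjpos hlim
  have hfeas2 : ∀ n, OpLE (-(T - f (N n))) (U n) := by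
    intro n
    rw [opLE_neg_iff]
    have hjpos : ∀ j, IsPosOp (U n + (f (N (n + j)) - f (N n))) := by
      intro j
      have he : U n + (f (N (n + j)) - f (N n)) =
          (∑ k ∈ Finset.range j, (Sd (k + n) + (f (N (k + n + 1)) - f (N (k + n))))) + U (n + j) := by
        rw [Finset.sum_add_distrib, htel n j, hUsplit n j]; abel
      rw [he]
      refine isPosOp_add (isPosOp_sum _ _ fun k _ => ?_) (hUpos (n + j))
      exact opLE_neg_iff.1 (hSd2 (k + n))
    have hNat : Tendsto (fun j => N (n + j)) atTop atTop := by
      apply hNmono.tendsto_atTop.comp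
      simpa [add_comm] using tendsto_add_atTop_nat n
    have hlim : Tendsto (fun j => U n + (f (N (n + j)) - f (N n))) atTop
        (𝓝 (U n + (T - f (N n)))) :=
      tendsto_const_nhds.add ((hT.comp hNat).sub tendsto_const_nhds)
    exact isPosOp_of_tendsto hjpos hlim
  -- T - f (N n) is an r-P operator, and its rPNorm is small
  have hrp : ∀ n, IsRPOp' (Q : Set (E →L[ℝ] E)) (T - f (N n)) := by
    intro n
    refine ⟨((1:ℝ)/2) • (U n + (T - f (N n))), ((1:ℝ)/2) • (U n - (T - f (N n))), ?_, ?_, ?_, ?_, ?_⟩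
    · exact Q.smul_mem _ (Q.add_mem (hUQ n) (Q.sub_mem hTQ (hfQ (N n))))
    · exact Q.smul_mem _ (Q.sub_mem (hUQ n) (Q.sub_mem hTQ (hfQ (N n))))
    · exact isPosOp_half (opLE_neg_iff.1 (hfeas2 n))
    · exact isPosOp_half (hfeas1 n)
    · module
  have hbound : ∀ n, rPNorm' (Q : Set (E →L[ℝ] E)) (T - f (N n)) ≤ 2 * (1/2 : ℝ)^n :=
    fun n => le_trans (rPNorm'_le (hUQ n) (hfeas1 n) (hfeas2 n)) (hUnorm n)
  have hTRP : IsRPOp' (Q : Set (E →L[ℝ] E)) T := by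
    have he : T = f (N 0) + (T - f (N 0)) := by abel
    rw [he]
    exact isRPOp'_add (hf (N 0)) (hrp 0)
  refine ⟨T, hTRP, ?_⟩
  -- convergence in rPNorm
  rw [Metric.tendsto_atTop]
  intro ε hε
  obtain ⟨k, hk⟩ := exists_pow_lt_of_lt_one (by linarith : (0:ℝ) < ε / 3) (by norm_num : (1/2 : ℝ) < 1)
  refine ⟨N k, fun n hn => ?_⟩
  have hrpn : IsRPOp' (Q : Set (E →L[ℝ] E)) (f n - T) := isRPOp'_sub (hf n) hTRP
  have h1 : rPNorm' (Q : Set (E →L[ℝ] E)) (f n - T)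
      ≤ rPNorm' (Q : Set (E →L[ℝ] E)) (f n - f (N k)) + rPNorm' (Q : Set (E →L[ℝ] E)) (f (N k) - T) := by
    have he : f n - T = (f n - f (N k)) + (f (N k) - T) := by abel
    rw [he]
    exact rPNorm'_triangle (isRPOp'_sub (hf n) (hf (N k))) (isRPOp'_sub (hf (N k)) hTRP)
  have h2 : rPNorm' (Q : Set (E →L[ℝ] E)) (f (N k) - T) ≤ 2 * (1/2 : ℝ)^k := by
    have he : f (N k) - T = -(T - f (N k)) := by abel
    rw [he, rPNorm'_neg]
    exact hbound k
  have h3 : rPNorm' (Q : Set (E →L[ℝ] E)) (f n - f (N k)) < (1/2 : ℝ)^k :=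
    hclose k n (N k) hn le_rfl
  have h4 : rPNorm' (Q : Set (E →L[ℝ] E)) (f n - T) < 3 * (1/2 : ℝ)^k := by linarith
  rw [Real.dist_eq, sub_zero, abs_of_nonneg (rPNorm'_nonneg hrpn)]
  linarith

end Aux

/-- For a norm closed linear subspace `P` of `L(E)`, `‖·‖_{r-P}` is a norm on the space of
r-`P`-operators dominating the regular norm (which dominates the operator norm), and the
space of r-`P`-operators is complete in this norm. -/
theorem rPNorm_is_complete_norm
    {E : Type*} [NormedAddCommGroup E] [Lattice E] [HasSolidNorm E] [IsOrderedAddMonoid E] [NormedSpace ℝ E] [CompleteSpace E]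
    (P : Submodule ℝ (E →L[ℝ] E)) (hP : IsClosed (P : Set (E →L[ℝ] E))) :
    -- `‖·‖_{r-P}` is a norm on r-P(E):
    (∀ T : E →L[ℝ] E, IsRPOp (P : Set (E →L[ℝ] E)) T → (rPNorm (P : Set (E →L[ℝ] E)) T = 0 ↔ T = 0)) ∧
    (∀ T S : E →L[ℝ] E, IsRPOp (P : Set (E →L[ℝ] E)) T → IsRPOp (P : Set (E →L[ℝ] E)) S →
      rPNorm (P : Set (E →L[ℝ] E)) (T + S) ≤
        rPNorm (P : Set (E →L[ℝ] E)) T + rPNorm (P : Set (E →L[ℝ] E)) S) ∧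
    (∀ (a : ℝ) (T : E →L[ℝ] E), IsRPOp (P : Set (E →L[ℝ] E)) T →
      rPNorm (P : Set (E →L[ℝ] E)) (a • T) = |a| * rPNorm (P : Set (E →L[ℝ] E)) T) ∧
    -- it dominates the regular norm, which dominates the operator norm:
    (∀ T : E →L[ℝ] E, IsRPOp (P : Set (E →L[ℝ] E)) T →
      rPNorm (P : Set (E →L[ℝ] E)) T ≥ regNorm T ∧ regNorm T ≥ ‖T‖) ∧
    -- completeness: every `‖·‖_{r-P}`-Cauchy sequence of r-P-operators converges in
    -- `‖·‖_{r-P}` to an r-P-operator: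
    (∀ f : ℕ → E →L[ℝ] E, (∀ n, IsRPOp (P : Set (E →L[ℝ] E)) (f n)) →
      (∀ ε > (0 : ℝ), ∃ N : ℕ, ∀ m ≥ N, ∀ n ≥ N,
        rPNorm (P : Set (E →L[ℝ] E)) (f m - f n) < ε) →
      ∃ T : E →L[ℝ] E, IsRPOp (P : Set (E →L[ℝ] E)) T ∧
        Tendsto (fun n => rPNorm (P : Set (E →L[ℝ] E)) (f n - T)) atTop (𝓝 0)) := by
  have eqRP : ∀ T : E →L[ℝ] E, IsRPOp (P : Set (E →L[ℝ] E)) T ↔ IsRPOp' (P : Set (E →L[ℝ] E)) T :=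
    fun T => Iff.rfl
  have eqN : ∀ T : E →L[ℝ] E, rPNorm (P : Set (E →L[ℝ] E)) T = rPNorm' (P : Set (E →L[ℝ] E)) T :=
    fun T => rfl
  have eqR : ∀ T : E →L[ℝ] E, regNorm T = regNorm' T := fun T => rfl
  refine ⟨?_, ?_, ?_, ?_, ?_⟩
  · intro T hT
    rw [eqN]
    constructor
    · intro h0
      have h1 := norm_le_rPNorm' ((eqRP T).1 hT)
      have h2 := norm_nonneg T
      have : ‖T‖ = 0 := le_antisymm (by rw [← h0]; exact h1) h2
      exact norm_eq_zero.1 this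
    · rintro rfl
      exact rPNorm'_zero
  · intro T S hT hS
    rw [eqN, eqN, eqN]
    exact rPNorm'_triangle ((eqRP T).1 hT) ((eqRP S).1 hS)
  · intro a T hT
    rw [eqN, eqN]
    exact rPNorm'_smul ((eqRP T).1 hT) a
  · intro T hT
    rw [eqN, eqR]
    exact ⟨regNorm'_le_rPNorm' ((eqRP T).1 hT), norm_le_regNorm' ((eqRP T).1 hT)⟩
  · intro f hf hC
    simp only [eqN, eqRP] at hf hC ⊢
    exact rp_complete hP f hf hC
end

section
/- Let E be a Banach lattice. Every regular operator on E (i.e. every difference of two positive bounded operators E → E) can be written as a difference of two positive limitedly L-weakly compact operators if and only if the identity operator on E is limitedly L-weakly compact. -/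
open Filter Topology

/-- A sequence of functionals converges to zero uniformly on a set `A`. -/
def UnifNullOn {X : Type*} [NormedAddCommGroup X] [NormedSpace ℝ X]
    (f : ℕ → X →L[ℝ] ℝ) (A : Set X) : Prop :=
  ∀ ε > (0 : ℝ), ∃ N : ℕ, ∀ n ≥ N, ∀ a ∈ A, |f n a| ≤ ε

/-- A norm bounded set `A` is limited: every weak*-null sequence in the dual converges
to zero uniformly on `A`. -/
def IsLimitedSet {X : Type*} [NormedAddCommGroup X] [NormedSpace ℝ X] (A : Set X) : Prop :=
  Bornology.IsBounded A ∧
    ∀ f : ℕ → X →L[ℝ] ℝ,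
      (∀ x : X, Tendsto (fun n => f n x) atTop (𝓝 0)) →
        UnifNullOn f A

/-- The solid hull of a set in a Banach lattice. -/
def solHull {F : Type*} [NormedAddCommGroup F] [Lattice F] [HasSolidNorm F] [IsOrderedAddMonoid F] (A : Set F) : Set F :=
  {x | ∃ a ∈ A, |x| ≤ |a|}

/-- A subset of a Banach lattice is L-weakly compact (Lwc) if it is norm bounded and every
disjoint sequence in its solid hull is norm null. -/
def IsLwcSet {F : Type*} [NormedAddCommGroup F] [Lattice F] [HasSolidNorm F] [IsOrderedAddMonoid F] (A : Set F) : Prop :=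
  Bornology.IsBounded A ∧
    ∀ x : ℕ → F, (∀ n, x n ∈ solHull A) →
      (∀ n m, n ≠ m → |x n| ⊓ |x m| = 0) →
        Tendsto (fun n => ‖x n‖) atTop (𝓝 0)

/-- An operator is limitedly L-weakly compact if it carries limited sets onto Lwc sets. -/
def IsLLwcOp {X : Type*} [NormedAddCommGroup X] [NormedSpace ℝ X]
    {F : Type*} [NormedAddCommGroup F] [Lattice F] [HasSolidNorm F] [IsOrderedAddMonoid F] [NormedSpace ℝ F] (T : X →L[ℝ] F) : Prop :=
  ∀ A : Set X, IsLimitedSet A → IsLwcSet (T '' A)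

/-- Every regular operator on `E` is a difference of two positive limitedly L-weakly compact
operators iff the identity of `E` is limitedly L-weakly compact. -/
theorem regular_eq_rLLwc_iff_id_lLwc
    {E : Type*} [NormedAddCommGroup E] [Lattice E] [HasSolidNorm E] [IsOrderedAddMonoid E] [NormedSpace ℝ E] [CompleteSpace E] :
    (∀ T : E →L[ℝ] E,
        (∃ T₁ T₂ : E →L[ℝ] E, IsPosOp T₁ ∧ IsPosOp T₂ ∧ T = T₁ - T₂) →
        ∃ S₁ S₂ : E →L[ℝ] E, IsPosOp S₁ ∧ IsPosOp S₂ ∧ IsLLwcOp S₁ ∧ IsLLwcOp S₂ ∧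
          T = S₁ - S₂) ↔
      IsLLwcOp (ContinuousLinearMap.id ℝ E) := by
  constructor
  · intro h
    obtain ⟨S₁, S₂, hS₁p, hS₂p, hS₁, hS₂, hid⟩ :=
      h (ContinuousLinearMap.id ℝ E)
        ⟨ContinuousLinearMap.id ℝ E, 0, fun x hx => by simpa using hx,
          fun x _ => by simp, (sub_zero _).symm⟩
    intro A hA
    have himg : (ContinuousLinearMap.id ℝ E) '' A = A := by
      ext x; simp
    rw [himg]
    refine ⟨hA.1, ?_⟩
    intro x hx hdisj
    choose a ha hxa using hx
    have hdecomp : ∀ v : E, v = S₁ v - S₂ v := by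
      intro v
      have := congrArg (fun f : E →L[ℝ] E => f v) hid
      simpa using this
    set w : ℕ → E := fun n => |x n| with hw
    set u : ℕ → E := fun n => |S₁ (a n)| with hu
    set v : ℕ → E := fun n => |S₂ (a n)| with hv
    have hwuv : ∀ n, w n ≤ u n + v n := by
      intro n
      calc w n = |x n| := rfl
        _ ≤ |a n| := hxa n
        _ = |S₁ (a n) - S₂ (a n)| := by rw [← hdecomp (a n)]
        _ ≤ |S₁ (a n)| + |S₂ (a n)| := by
            have h1 : |S₁ (a n) - S₂ (a n)| ≤ |S₁ (a n)| + |-(S₂ (a n))| := by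
              rw [sub_eq_add_neg]; exact abs_add_le _ _
            rwa [abs_neg] at h1
    set y : ℕ → E := fun n => w n ⊓ u n with hy
    set z : ℕ → E := fun n => w n - y n with hz
    have hy0 : ∀ n, 0 ≤ y n := fun n => le_inf (abs_nonneg _) (abs_nonneg _)
    have hyu : ∀ n, y n ≤ u n := fun n => inf_le_right
    have hyw : ∀ n, y n ≤ w n := fun n => inf_le_left
    have hzeq : ∀ n, z n = 0 ⊔ (w n - u n) := by
      intro n
      show w n - (w n ⊓ u n) = 0 ⊔ (w n - u n)
      rw [sub_inf, sub_self]
    have hz0 : ∀ n, 0 ≤ z n := fun n => by rw [hzeq n]; exact le_sup_left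
    have hzv : ∀ n, z n ≤ v n := by
      intro n; rw [hzeq n]
      refine sup_le (abs_nonneg _) ?_
      rw [sub_le_iff_le_add]
      exact (hwuv n).trans (by rw [add_comm])
    have hzw : ∀ n, z n ≤ w n := by
      intro n; rw [hzeq n]
      exact sup_le (abs_nonneg _) (sub_le_self _ (abs_nonneg _))
    have hLwc₁ := hS₁ A hA
    have hLwc₂ := hS₂ A hA
    have hty : Tendsto (fun n => ‖y n‖) atTop (𝓝 0) := by
      refine hLwc₁.2 y (fun n => ⟨S₁ (a n), ⟨a n, ?_, rfl⟩, ?_⟩) ?_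
      · exact ha n
      · rw [abs_of_nonneg (hy0 n)]
        exact hyu n
      · intro n m hnm
        have h1 : |y n| ⊓ |y m| ≤ |x n| ⊓ |x m| := by
          rw [abs_of_nonneg (hy0 n), abs_of_nonneg (hy0 m)]
          exact inf_le_inf (hyw n) (hyw m)
        have h2 := hdisj n m hnm
        exact le_antisymm (h2 ▸ h1) (le_inf (abs_nonneg _) (abs_nonneg _))
    have htz : Tendsto (fun n => ‖z n‖) atTop (𝓝 0) := by
      refine hLwc₂.2 z (fun n => ⟨S₂ (a n), ⟨a n, ?_, rfl⟩, ?_⟩) ?_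
      · exact ha n
      · rw [abs_of_nonneg (hz0 n)]
        exact hzv n
      · intro n m hnm
        have h1 : |z n| ⊓ |z m| ≤ |x n| ⊓ |x m| := by
          rw [abs_of_nonneg (hz0 n), abs_of_nonneg (hz0 m)]
          exact inf_le_inf (hzw n) (hzw m)
        have h2 := hdisj n m hnm
        exact le_antisymm (h2 ▸ h1) (le_inf (abs_nonneg _) (abs_nonneg _))
    have hbound : ∀ n, ‖x n‖ ≤ ‖y n‖ + ‖z n‖ := by
      intro n
      have : x n = x n := rfl
      have hwn : w n = y n + z n := by
        show |x n| = y n + (w n - y n)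
        show |x n| = y n + (|x n| - y n)
        abel
      calc ‖x n‖ = ‖|x n|‖ := (norm_abs_eq_norm _).symm
        _ = ‖y n + z n‖ := by rw [← hwn]
        _ ≤ ‖y n‖ + ‖z n‖ := norm_add_le _ _
    have := (hty.add htz)
    rw [add_zero] at this
    exact squeeze_zero (fun n => norm_nonneg _) hbound this
  · rintro hid T ⟨T₁, T₂, h1, h2, hT⟩
    have key : ∀ S : E →L[ℝ] E, IsLLwcOp S := by
      intro S A hA
      have hlim : IsLimitedSet (S '' A) := by
        constructor
        · exact (S.lipschitz.isBounded_image hA.1)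
        · intro f hf ε hε
          obtain ⟨N, hN⟩ := hA.2 (fun n => (f n).comp S) (fun x => hf (S x)) ε hε
          exact ⟨N, fun n hn a ⟨b, hb, hba⟩ => by
            have := hN n hn b hb
            simpa [hba] using this⟩
      have h := hid _ hlim
      have himg : (ContinuousLinearMap.id ℝ E) '' (S '' A) = S '' A := by
        ext x; simp
      rwa [himg] at h
    exact ⟨T₁, T₂, h1, h2, key T₁, key T₂, hT⟩
end

section
/- Let E be a Banach lattice. Every regular operator on E (i.e. every difference of two positive bounded operators E → E) can be written as a difference of two positive limitedly M-weakly compact operators if and only if the identity operator on E is limitedly M-weakly compact. -/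
open Filter Topology

/-- An operator `T` on a Banach lattice `E` is limitedly M-weakly compact if `(T xₙ)` is
weakly null for every disjoint norm bounded sequence `(xₙ)` in `E`. -/
def IsLMwcOp {E : Type*} [NormedAddCommGroup E] [Lattice E] [HasSolidNorm E] [IsOrderedAddMonoid E] [NormedSpace ℝ E]
    {Y : Type*} [NormedAddCommGroup Y] [NormedSpace ℝ Y] (T : E →L[ℝ] Y) : Prop :=
  ∀ x : ℕ → E, Bornology.IsBounded (Set.range x) →
    (∀ n m, n ≠ m → |x n| ⊓ |x m| = 0) →
      ∀ g : Y →L[ℝ] ℝ, Tendsto (fun n => g (T (x n))) atTop (𝓝 0)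

/-- Every regular operator on `E` is a difference of two positive limitedly M-weakly compact
operators iff the identity of `E` is limitedly M-weakly compact. -/
theorem regular_eq_rLMwc_iff_id_lMwc
    {E : Type*} [NormedAddCommGroup E] [Lattice E] [HasSolidNorm E] [IsOrderedAddMonoid E] [NormedSpace ℝ E] [CompleteSpace E] :
    (∀ T : E →L[ℝ] E,
        (∃ T₁ T₂ : E →L[ℝ] E, IsPosOp T₁ ∧ IsPosOp T₂ ∧ T = T₁ - T₂) →
        ∃ S₁ S₂ : E →L[ℝ] E, IsPosOp S₁ ∧ IsPosOp S₂ ∧ IsLMwcOp S₁ ∧ IsLMwcOp S₂ ∧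
          T = S₁ - S₂) ↔
      IsLMwcOp (ContinuousLinearMap.id ℝ E) := by
  constructor
  · intro h
    obtain ⟨S₁, S₂, _, _, hS₁, hS₂, hid⟩ :=
      h (ContinuousLinearMap.id ℝ E)
        ⟨ContinuousLinearMap.id ℝ E, 0, fun x hx => hx, fun x _ => le_refl _, by simp⟩
    intro x hb hd g
    have h1 := hS₁ x hb hd g
    have h2 := hS₂ x hb hd g
    have := h1.sub h2
    simp only [sub_zero] at this
    convert this using 2 with n
    rw [hid]
    simp [map_sub]
  · intro h T hT
    obtain ⟨T₁, T₂, hp1, hp2, hTeq⟩ := hT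
    have key : ∀ S : E →L[ℝ] E, IsLMwcOp S := fun S x hb hd g => h x hb hd (g.comp S)
    exact ⟨T₁, T₂, hp1, hp2, key T₁, key T₂, hTeq⟩
end
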